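/- For a uniformly random restricted growth sequence π of length n ≥ 3 and a pair (1, j) with 3 ≤ j ≤ n, the probability that (1,j) is a weak but not strong visible pair equals B_{n−j+2}/B_n. -/
import Mathlib


/-- Stirling numbers of the second kind. -/
def stirlingS2 : ℕ → ℕ → ℕ
  | 0, 0 => 1
  | 0, _ + 1 => 0
  | _ + 1, 0 => 0
  | n + 1, k + 1 => (k + 1) * stirlingS2 n (k + 1) + stirlingS2 n k

/-- Bell numbers. -/
def bell (n : ℕ) : ℕ := ∑ k ∈ Finset.range (n + 1), stirlingS2 n k

/-- Restricted growth sequence of length `n` (positive letters, starts at 1,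
each next letter at most one more than the running maximum). -/
def IsRGS {n : ℕ} (π : Fin n → ℕ) : Prop :=
  (∀ i, 1 ≤ π i) ∧ (∀ h : 0 < n, π ⟨0, h⟩ = 1) ∧
    ∀ (j : Fin n) (h : j.val + 1 < n), π ⟨j.val + 1, h⟩ ≤ 1 + (Finset.Iic j).sup π

/-- `(i,j)` is a strong visible pair of `π`. -/
def StrongVisible {n : ℕ} (π : Fin n → ℕ) (i j : Fin n) : Prop :=
  i < j ∧ ∀ ℓ, i < ℓ → ℓ < j → π ℓ < min (π i) (π j)

/-- `(i,j)` is a weak visible pair of `π`. -/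
def WeakVisible {n : ℕ} (π : Fin n → ℕ) (i j : Fin n) : Prop :=
  i < j ∧ ∀ ℓ, i < ℓ → ℓ < j → π ℓ ≤ min (π i) (π j)

instance {n : ℕ} (π : Fin n → ℕ) (i j : Fin n) : Decidable (StrongVisible π i j) := by
  unfold StrongVisible; infer_instance

instance {n : ℕ} (π : Fin n → ℕ) (i j : Fin n) : Decidable (WeakVisible π i j) := by
  unfold WeakVisible; infer_instance

namespace RGSaux

lemma snoc_val {m : ℕ} (ρ : Fin m → ℕ) (v : ℕ) (i : Fin (m+1)) (h : i.val < m) :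
    (Fin.snoc ρ v : Fin (m+1) → ℕ) i = ρ ⟨i.val, h⟩ := by
  simp [Fin.snoc, h]; rfl

lemma snoc_last' {m : ℕ} (ρ : Fin m → ℕ) (v : ℕ) (i : Fin (m+1)) (h : i.val = m) :
    (Fin.snoc ρ v : Fin (m+1) → ℕ) i = v := by
  have : i = Fin.last m := by ext; simpa [Fin.val_last] using h
  rw [this, Fin.snoc_last]

lemma sup_Iic_snoc {m : ℕ} (ρ : Fin m → ℕ) (v : ℕ) (j : Fin (m+1)) (h : j.val < m) :
    (Finset.Iic j).sup (Fin.snoc ρ v : Fin (m+1) → ℕ) = (Finset.Iic (⟨j.val, h⟩ : Fin m)).sup ρ := by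
  apply le_antisymm
  · apply Finset.sup_le
    intro i hi
    rw [Finset.mem_Iic, Fin.le_def] at hi
    have hi' : i.val < m := lt_of_le_of_lt hi h
    rw [snoc_val ρ v i hi']
    exact Finset.le_sup (Finset.mem_Iic.mpr (Fin.mk_le_mk.mpr hi))
  · apply Finset.sup_le
    intro i hi
    rw [Finset.mem_Iic, Fin.le_def] at hi
    have he := snoc_val ρ v (Fin.castSucc i) (by simpa using i.isLt)
    simp only [Fin.coe_castSucc, Fin.eta] at he
    rw [← he]
    exact Finset.le_sup (Finset.mem_Iic.mpr (by simpa [Fin.le_def] using hi))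

lemma sup_univ_snoc {m : ℕ} (ρ : Fin m → ℕ) (v : ℕ) :
    Finset.univ.sup (Fin.snoc ρ v : Fin (m+1) → ℕ) = max (Finset.univ.sup ρ) v := by
  apply le_antisymm
  · apply Finset.sup_le
    intro i _
    by_cases h : i.val < m
    · rw [snoc_val ρ v i h]
      exact le_trans (Finset.le_sup (Finset.mem_univ _)) (le_max_left _ _)
    · rw [snoc_last' ρ v i (by have := i.isLt; omega)]
      exact le_max_right _ _
  · apply max_le
    · apply Finset.sup_le
      intro i _
      have he := snoc_val ρ v (Fin.castSucc i) (by simpa using i.isLt)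
      simp only [Fin.coe_castSucc, Fin.eta] at he
      rw [← he]
      exact Finset.le_sup (Finset.mem_univ _)
    · have he := snoc_last' ρ v (Fin.last m) (by simp)
      calc v = (Fin.snoc ρ v : Fin (m+1) → ℕ) (Fin.last m) := he.symm
        _ ≤ _ := Finset.le_sup (Finset.mem_univ _)

lemma Iic_last_eq_univ {m : ℕ} (j : Fin m) (hj : j.val = m - 1) :
    Finset.Iic j = Finset.univ := by
  apply Finset.eq_univ_iff_forall.mpr
  intro i
  rw [Finset.mem_Iic, Fin.le_def, hj]
  have := i.isLt; omega

lemma isRGS_snoc {m : ℕ} (ρ : Fin m → ℕ) (v : ℕ) :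
    IsRGS (Fin.snoc ρ v : Fin (m+1) → ℕ) ↔ IsRGS ρ ∧ 1 ≤ v ∧ v ≤ 1 + Finset.univ.sup ρ := by
  constructor
  · rintro ⟨h1, h2, h3⟩
    refine ⟨⟨?_, ?_, ?_⟩, ?_, ?_⟩
    · intro i
      have := h1 (Fin.castSucc i)
      rwa [Fin.snoc_castSucc] at this
    · intro hm
      have := h2 (Nat.succ_pos m)
      rwa [snoc_val ρ v ⟨0, Nat.succ_pos m⟩ hm] at this
    · intro jj hjj
      have := h3 ⟨jj.val, by omega⟩ (by simpa using by omega)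
      rw [snoc_val ρ v ⟨jj.val + 1, by omega⟩ hjj,
        sup_Iic_snoc ρ v ⟨jj.val, by omega⟩ jj.isLt] at this
      simpa using this
    · have := h1 (Fin.last m)
      rwa [Fin.snoc_last] at this
    · rcases Nat.eq_zero_or_pos m with hm | hm
      · subst hm
        have := h2 (Nat.succ_pos 0)
        rw [snoc_last' ρ v ⟨0, Nat.succ_pos 0⟩ rfl] at this
        omega
      · have h3' := h3 ⟨m - 1, by omega⟩ (by simp; omega)
        rw [snoc_last' ρ v ⟨(m-1) + 1, by omega⟩ (by simp; omega),
          sup_Iic_snoc ρ v ⟨m-1, by omega⟩ (by simp; omega),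
          Iic_last_eq_univ _ rfl] at h3'
        exact h3'
  · rintro ⟨⟨h1, h2, h3⟩, hv1, hv2⟩
    refine ⟨?_, ?_, ?_⟩
    · intro i
      by_cases h : i.val < m
      · rw [snoc_val ρ v i h]; exact h1 _
      · rw [snoc_last' ρ v i (by have := i.isLt; omega)]; exact hv1
    · intro _
      rcases Nat.eq_zero_or_pos m with hm | hm
      · subst hm
        rw [snoc_last' ρ v ⟨0, Nat.succ_pos 0⟩ rfl]
        simp at hv2; omega
      · rw [snoc_val ρ v ⟨0, Nat.succ_pos m⟩ hm]; exact h2 hm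
    · intro jj hjj
      by_cases h : jj.val + 1 < m
      · rw [snoc_val ρ v ⟨jj.val + 1, hjj⟩ h,
          sup_Iic_snoc ρ v jj (by omega)]
        have := h3 ⟨jj.val, by omega⟩ h
        simpa using this
      · have hjm : jj.val + 1 = m := by have := jj.isLt; omega
        rw [snoc_last' ρ v ⟨jj.val + 1, hjj⟩ hjm,
          sup_Iic_snoc ρ v jj (by omega),
          Iic_last_eq_univ _ (by simp; omega)]
        exact hv2

lemma rgs_le {m : ℕ} {π : Fin m → ℕ} (h : IsRGS π) : ∀ i : Fin m, π i ≤ i.val + 1 := by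
  obtain ⟨h1, h2, h3⟩ := h
  have key : ∀ k, ∀ hk : k < m, π ⟨k, hk⟩ ≤ k + 1 := by
    intro k
    induction k using Nat.strong_induction_on with
    | _ k ih =>
      intro hk
      match k with
      | 0 => rw [h2 (by omega)]
      | k + 1 =>
        have hstep := h3 ⟨k, by omega⟩ hk
        have hsup : (Finset.Iic (⟨k, by omega⟩ : Fin m)).sup π ≤ k + 1 := by
          apply Finset.sup_le
          intro i hi
          rw [Finset.mem_Iic, Fin.le_def] at hi
          simp only at hi
          have hih := ih i.val (by omega) i.isLt
          have : π i = π ⟨i.val, i.isLt⟩ := by congr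
          omega
        simp only at hstep
        omega
  intro i
  have := key i.val i.isLt
  have he : π i = π ⟨i.val, i.isLt⟩ := by congr
  omega

lemma rgs_finite (m : ℕ) : {π : Fin m → ℕ | IsRGS π}.Finite := by
  apply Set.Finite.subset (Set.Finite.pi (fun _ : Fin m => Set.finite_Iic (m+1)))
  intro π hπ
  rw [Set.mem_pi]
  intro i _
  have := rgs_le hπ i
  have := i.isLt
  simp only [Set.mem_Iic]
  omega

def Sset (m k : ℕ) : Set (Fin m → ℕ) := {π | IsRGS π ∧ Finset.univ.sup π = k}

lemma Sset_finite (m k : ℕ) : (Sset m k).Finite :=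
  Set.Finite.subset (rgs_finite m) (fun _ h => h.1)

lemma ncard_prod {α β : Type*} {s : Set α} {t : Set β} (hs : s.Finite) (ht : t.Finite) :
    (s ×ˢ t).ncard = s.ncard * t.ncard := by
  rw [Set.ncard_eq_toFinset_card _ (hs.prod ht), ← Set.Finite.toFinset_prod hs ht,
    Finset.card_product, ← Set.ncard_eq_toFinset_card _ hs, ← Set.ncard_eq_toFinset_card _ ht]

lemma snoc_inj {m : ℕ} : Function.Injective (fun p : (Fin m → ℕ) × ℕ => (Fin.snoc p.1 p.2 : Fin (m+1) → ℕ)) := by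
  rintro ⟨ρ, v⟩ ⟨ρ', v'⟩ h
  simp only at h
  have h1 : ρ = ρ' := by
    funext i
    have := congrFun h (Fin.castSucc i)
    simpa [Fin.snoc_castSucc] using this
  have h2 : v = v' := by
    have := congrFun h (Fin.last m)
    simpa [Fin.snoc_last] using this
  simp [h1, h2]

lemma Sset_succ (m k : ℕ) : Sset (m+1) (k+1) =
    (fun p : (Fin m → ℕ) × ℕ => (Fin.snoc p.1 p.2 : Fin (m+1) → ℕ)) ''
      ((Sset m (k+1) ×ˢ Set.Icc 1 (k+1)) ∪ (Sset m k ×ˢ {k+1})) := by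
  ext π
  constructor
  · rintro ⟨hR, hsup⟩
    have hdec : π = (Fin.snoc (Fin.init π) (π (Fin.last m)) : Fin (m+1) → ℕ) :=
      (Fin.snoc_init_self π).symm
    rw [hdec] at hR hsup
    rw [isRGS_snoc] at hR
    rw [sup_univ_snoc] at hsup
    obtain ⟨hρ, hv1, hv2⟩ := hR
    by_cases hc : Finset.univ.sup (Fin.init π) = k + 1
    · refine ⟨(Fin.init π, π (Fin.last m)), Or.inl ⟨⟨hρ, hc⟩, ?_⟩, hdec.symm⟩
      simp only [Set.mem_Icc]
      constructor
      · exact hv1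
      · rw [hc] at hsup; omega
    · have hvk : π (Fin.last m) = k + 1 := by
        rcases max_cases (Finset.univ.sup (Fin.init π)) (π (Fin.last m)) with ⟨h1, _⟩ | ⟨h1, _⟩ <;> omega
      have hsk : Finset.univ.sup (Fin.init π) = k := by
        rcases max_cases (Finset.univ.sup (Fin.init π)) (π (Fin.last m)) with ⟨h1, h2⟩ | ⟨h1, h2⟩ <;> omega
      exact ⟨(Fin.init π, π (Fin.last m)), Or.inr ⟨⟨hρ, hsk⟩, by simp [hvk]⟩, hdec.symm⟩
  · rintro ⟨⟨ρ, v⟩, hmem, rfl⟩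
    rcases hmem with ⟨⟨hρ, hsk⟩, hv⟩ | ⟨⟨hρ, hsk⟩, hv⟩
    · simp only [Set.mem_Icc] at hv
      refine ⟨(isRGS_snoc ρ v).mpr ⟨hρ, hv.1, by rw [hsk]; omega⟩, ?_⟩
      rw [sup_univ_snoc, hsk]
      omega
    · simp only [Set.mem_singleton_iff] at hv
      subst hv
      refine ⟨(isRGS_snoc ρ (k+1)).mpr ⟨hρ, by omega, by rw [hsk]; omega⟩, ?_⟩
      rw [sup_univ_snoc, hsk]
      omega

lemma Sset_ncard : ∀ m k : ℕ, (Sset m k).ncard = stirlingS2 m k := by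
  intro m
  induction m with
  | zero =>
    intro k
    match k with
    | 0 =>
      have : Sset 0 0 = Set.univ := by
        ext π
        simp only [Sset, Set.mem_setOf_eq, Set.mem_univ, iff_true]
        refine ⟨⟨fun i => absurd i.isLt (by omega), fun h => absurd h (by omega),
          fun j _ => absurd j.isLt (by omega)⟩, by simp⟩
      rw [this, Set.ncard_univ, Nat.card_eq_fintype_card]
      simp [stirlingS2]
    | k + 1 =>
      have : Sset 0 (k+1) = ∅ := by
        ext π
        simp only [Sset, Set.mem_setOf_eq, Set.mem_empty_iff_false, iff_false]
        rintro ⟨_, hs⟩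
        simp at hs
      rw [this, Set.ncard_empty]
      simp [stirlingS2]
  | succ m ih =>
    intro k
    match k with
    | 0 =>
      have : Sset (m+1) 0 = ∅ := by
        ext π
        simp only [Sset, Set.mem_setOf_eq, Set.mem_empty_iff_false, iff_false]
        rintro ⟨⟨h1, _, _⟩, hs⟩
        have := h1 0
        have hle : π 0 ≤ Finset.univ.sup π := Finset.le_sup (Finset.mem_univ _)
        omega
      rw [this, Set.ncard_empty]
      simp [stirlingS2]
    | k + 1 =>
      rw [Sset_succ m k,
        Set.ncard_image_of_injective _ snoc_inj,
        Set.ncard_union_eq ?disj ((Sset_finite m (k+1)).prod (Set.finite_Icc _ _))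
          ((Sset_finite m k).prod (Set.finite_singleton _)),
        ncard_prod (Sset_finite m (k+1)) (Set.finite_Icc _ _),
        ncard_prod (Sset_finite m k) (Set.finite_singleton _)]
      · rw [ih (k+1), ih k]
        have hIcc : (Set.Icc 1 (k+1)).ncard = k + 1 := by
          rw [← Finset.coe_Icc, Set.ncard_coe_finset, Nat.card_Icc]; omega
        rw [hIcc, Set.ncard_singleton]
        show stirlingS2 m (k+1) * (k+1) + stirlingS2 m k * 1 = stirlingS2 (m+1) (k+1)
        show _ = (k + 1) * stirlingS2 m (k + 1) + stirlingS2 m k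
        ring
      case disj =>
        rw [Set.disjoint_left]
        rintro ⟨ρ, v⟩ ⟨⟨_, h1⟩, _⟩ ⟨⟨_, h2⟩, _⟩
        omega

lemma ncard_biUnion {α : Type*} (s : Finset ℕ) (f : ℕ → Set α)
    (hf : ∀ i ∈ s, (f i).Finite)
    (hd : ∀ i ∈ s, ∀ j ∈ s, i ≠ j → Disjoint (f i) (f j)) :
    (⋃ i ∈ s, f i).ncard = ∑ i ∈ s, (f i).ncard := by
  classical
  induction s using Finset.induction with
  | empty => simp
  | @insert a s ha ih =>
    have hfa : (f a).Finite := hf a (Finset.mem_insert_self a s)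
    have hfU : (⋃ x ∈ s, f x).Finite :=
      Set.Finite.biUnion (Finset.finite_toSet s) (fun i hi => hf i (Finset.mem_insert_of_mem hi))
    have hdisj : Disjoint (f a) (⋃ x ∈ s, f x) := by
      rw [Set.disjoint_left]
      intro x hx hx'
      simp only [Set.mem_iUnion] at hx'
      obtain ⟨i, hi, hxi⟩ := hx'
      exact (Set.disjoint_left.mp (hd a (Finset.mem_insert_self a s) i
        (Finset.mem_insert_of_mem hi) (by rintro rfl; exact ha hi))) hx hxi
    rw [Finset.set_biUnion_insert, Finset.sum_insert ha,
      Set.ncard_union_eq hdisj hfa hfU,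
      ih (fun i hi => hf i (Finset.mem_insert_of_mem hi))
        (fun i hi j hj hij => hd i (Finset.mem_insert_of_mem hi) j (Finset.mem_insert_of_mem hj) hij)]

lemma rgs_ncard (m : ℕ) : {π : Fin m → ℕ | IsRGS π}.ncard = bell m := by
  have hcover : {π : Fin m → ℕ | IsRGS π} = ⋃ k ∈ Finset.range (m+1), Sset m k := by
    ext π
    simp only [Set.mem_setOf_eq, Set.mem_iUnion, Finset.mem_range]
    constructor
    · intro h
      refine ⟨Finset.univ.sup π, ?_, h, rfl⟩
      have : Finset.univ.sup π ≤ m := by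
        apply Finset.sup_le
        intro i _
        have := rgs_le h i
        have := i.isLt
        omega
      omega
    · rintro ⟨k, _, h, _⟩
      exact h
  rw [hcover, ncard_biUnion _ _ (fun k _ => Sset_finite m k)
    (fun i _ j _ hij => by
      rw [Set.disjoint_left]
      rintro π ⟨_, h1⟩ ⟨_, h2⟩
      exact hij (h1 ▸ h2 ▸ rfl))]
  unfold bell
  exact Finset.sum_congr rfl (fun k _ => Sset_ncard m k)

def shiftF (n m d : ℕ) (hn : n = m + d) (hm : 1 ≤ m) (σ : Fin m → ℕ) : Fin n → ℕ :=
  fun i => if h : i.val < d then 1 else σ ⟨i.val - d, by have := i.isLt; omega⟩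

def unshiftF (n m d : ℕ) (hn : n = m + d) (π : Fin n → ℕ) : Fin m → ℕ :=
  fun t => π ⟨t.val + d, by have := t.isLt; omega⟩

lemma shiftF_lt {n m d : ℕ} (hn : n = m + d) (hm : 1 ≤ m) (σ : Fin m → ℕ)
    (i : Fin n) (h : i.val < d) : shiftF n m d hn hm σ i = 1 := dif_pos h

lemma shiftF_ge {n m d : ℕ} (hn : n = m + d) (hm : 1 ≤ m) (σ : Fin m → ℕ)
    (i : Fin n) (h : ¬ i.val < d) :
    shiftF n m d hn hm σ i = σ ⟨i.val - d, by have := i.isLt; omega⟩ := dif_neg h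

lemma unshiftF_apply {n m d : ℕ} (hn : n = m + d) (π : Fin n → ℕ) (t : Fin m) :
    unshiftF n m d hn π t = π ⟨t.val + d, by have := t.isLt; omega⟩ := rfl

lemma shiftF_add {n m d : ℕ} (hn : n = m + d) (hm : 1 ≤ m) (σ : Fin m → ℕ)
    (t : Fin m) : shiftF n m d hn hm σ ⟨t.val + d, by have := t.isLt; omega⟩ = σ t := by
  rw [shiftF_ge hn hm σ _ (show ¬ t.val + d < d by omega)]
  congr 1
  ext
  show t.val + d - d = t.val
  omega

lemma shiftF_inj {n m d : ℕ} (hn : n = m + d) (hm : 1 ≤ m) :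
    Function.Injective (shiftF n m d hn hm) := by
  intro σ σ' h
  funext t
  have h1 := congrFun h ⟨t.val + d, by have := t.isLt; omega⟩
  rwa [shiftF_add hn hm σ t, shiftF_add hn hm σ' t] at h1

lemma card_ones_prefix (n m d : ℕ) (hn : n = m + d) (hm : 1 ≤ m) :
    {π : Fin n → ℕ | IsRGS π ∧ ∀ i : Fin n, i.val < d + 1 → π i = 1}.ncard
      = {σ : Fin m → ℕ | IsRGS σ}.ncard := by
  have himg : shiftF n m d hn hm '' {σ : Fin m → ℕ | IsRGS σ}
      = {π : Fin n → ℕ | IsRGS π ∧ ∀ i : Fin n, i.val < d + 1 → π i = 1} := by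
    ext π
    constructor
    · rintro ⟨σ, ⟨hσ1, hσ2, hσ3⟩, rfl⟩
      refine ⟨⟨?_, ?_, ?_⟩, ?_⟩
      · intro i
        by_cases h : i.val < d
        · rw [shiftF_lt hn hm σ i h]
        · rw [shiftF_ge hn hm σ i h]; exact hσ1 _
      · intro h0
        by_cases h : (0:ℕ) < d
        · rw [shiftF_lt hn hm σ _ h]
        · rw [shiftF_ge hn hm σ _ h]
          have he : (⟨(⟨0, h0⟩ : Fin n).val - d, by omega⟩ : Fin m) = ⟨0, hm⟩ := by
            ext; show (0:ℕ) - d = 0; omega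
          rw [he, hσ2 hm]
      · intro jj hjj
        by_cases hc : jj.val + 1 < d
        · rw [shiftF_lt hn hm σ _ (show (⟨jj.val + 1, hjj⟩ : Fin n).val < d from hc)]
          exact Nat.le_add_right 1 _
        by_cases hc2 : jj.val + 1 = d
        · rw [shiftF_ge hn hm σ _ (show ¬ (⟨jj.val + 1, hjj⟩ : Fin n).val < d by
            show ¬ jj.val + 1 < d; omega)]
          have he : (⟨(⟨jj.val + 1, hjj⟩ : Fin n).val - d, by have := jj.isLt; omega⟩ : Fin m)
              = ⟨0, hm⟩ := by ext; show jj.val + 1 - d = 0; omega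
          rw [he, hσ2 hm]
          exact Nat.le_add_right 1 _
        · have hgt : d ≤ jj.val := by omega
          rw [shiftF_ge hn hm σ _ (show ¬ (⟨jj.val + 1, hjj⟩ : Fin n).val < d by
            show ¬ jj.val + 1 < d; omega)]
          have htlt : (jj.val - d) + 1 < m := by have := jj.isLt; omega
          have hkey := hσ3 ⟨jj.val - d, by omega⟩ htlt
          simp only at hkey
          have hsup : (Finset.Iic (⟨jj.val - d, by have := jj.isLt; omega⟩ : Fin m)).sup σ
              ≤ (Finset.Iic jj).sup (shiftF n m d hn hm σ) := by
            apply Finset.sup_le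
            intro s hs
            rw [Finset.mem_Iic, Fin.le_def] at hs
            simp only at hs
            rw [← shiftF_add hn hm σ s]
            exact Finset.le_sup (Finset.mem_Iic.mpr (Fin.mk_le_mk.mpr (by omega)))
          have he : (⟨(⟨jj.val + 1, hjj⟩ : Fin n).val - d, by have := jj.isLt; omega⟩ : Fin m)
              = ⟨(jj.val - d) + 1, htlt⟩ := by
            ext; show jj.val + 1 - d = (jj.val - d) + 1; omega
          rw [he]
          omega
      · intro i hi
        by_cases h : i.val < d
        · rw [shiftF_lt hn hm σ i h]
        · rw [shiftF_ge hn hm σ i h]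
          have he : (⟨i.val - d, by have := i.isLt; omega⟩ : Fin m) = ⟨0, hm⟩ := by
            ext; show i.val - d = 0; omega
          rw [he, hσ2 hm]
    · rintro ⟨⟨hπ1, hπ2, hπ3⟩, hones⟩
      refine ⟨unshiftF n m d hn π, ⟨?_, ?_, ?_⟩, ?_⟩
      · intro t
        rw [unshiftF_apply]
        exact hπ1 _
      · intro h0
        rw [unshiftF_apply]
        exact hones _ (show (0:ℕ) + d < d + 1 by omega)
      · intro t ht
        have hkey : π ⟨t.val + d + 1, by have := t.isLt; omega⟩
            ≤ 1 + (Finset.Iic (⟨t.val + d, by have := t.isLt; omega⟩ : Fin n)).sup π :=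
          hπ3 ⟨t.val + d, by have := t.isLt; omega⟩
            (show t.val + d + 1 < n by have := t.isLt; omega)
        have hlhs : unshiftF n m d hn π ⟨t.val + 1, ht⟩
            = π ⟨t.val + d + 1, by have := t.isLt; omega⟩ := by
          rw [unshiftF_apply]
          congr 1
          ext; show t.val + 1 + d = t.val + d + 1; omega
        rw [hlhs]
        have hsup : (Finset.Iic (⟨t.val + d, by have := t.isLt; omega⟩ : Fin n)).sup π
            ≤ (Finset.Iic t).sup (unshiftF n m d hn π) := by
          apply Finset.sup_le
          intro s hs
          rw [Finset.mem_Iic, Fin.le_def] at hs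
          simp only at hs
          by_cases hsd : s.val < d + 1
          · rw [hones s hsd]
            have h0m : (0 : ℕ) < m := hm
            calc (1:ℕ) = unshiftF n m d hn π ⟨0, h0m⟩ := by
                  rw [unshiftF_apply, hones _ (show (0:ℕ) + d < d + 1 by omega)]
              _ ≤ _ := Finset.le_sup (Finset.mem_Iic.mpr (Fin.mk_le_mk.mpr (by omega)))
          · have hval : π s = unshiftF n m d hn π ⟨s.val - d, by have := s.isLt; omega⟩ := by
              rw [unshiftF_apply]
              congr 1
              ext; show s.val = s.val - d + d; omega
            rw [hval]
            exact Finset.le_sup (Finset.mem_Iic.mpr (Fin.mk_le_mk.mpr (by omega)))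
        omega
      · funext i
        by_cases h : i.val < d
        · rw [shiftF_lt hn hm _ i h]
          exact (hones i (by omega)).symm
        · rw [shiftF_ge hn hm _ i h, unshiftF_apply]
          congr 1
          ext; show i.val - d + d = i.val; omega
  rw [← himg, Set.ncard_image_of_injective _ (shiftF_inj hn hm)]

end RGSaux

/-- For a uniformly random restricted growth sequence of length `n ≥ 3` and a pair
`(1, j)` with `3 ≤ j ≤ n` (1-indexed positions), the probability that `(1,j)` is a
weak but not strong visible pair equals `B_{n-j+2} / B_n`. -/
theorem stmt13 (n j : ℕ) (hn : 3 ≤ n) (hj : 3 ≤ j) (hjn : j ≤ n)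
    (h1 : 0 < n) (hj' : j - 1 < n) :
    ({π : Fin n → ℕ | IsRGS π ∧ WeakVisible π ⟨0, h1⟩ ⟨j - 1, hj'⟩ ∧
        ¬ StrongVisible π ⟨0, h1⟩ ⟨j - 1, hj'⟩}.ncard : ℚ) / (bell n : ℚ) =
      (bell (n - j + 2) : ℚ) / (bell n : ℚ) := by
  classical
  have hset : {π : Fin n → ℕ | IsRGS π ∧ WeakVisible π ⟨0, h1⟩ ⟨j - 1, hj'⟩ ∧
        ¬ StrongVisible π ⟨0, h1⟩ ⟨j - 1, hj'⟩}
      = {π : Fin n → ℕ | IsRGS π ∧ ∀ i : Fin n, i.val < (j - 2) + 1 → π i = 1} := by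
    ext π
    simp only [Set.mem_setOf_eq]
    constructor
    · rintro ⟨hR, ⟨_, hW⟩, _⟩
      refine ⟨hR, ?_⟩
      intro i hi
      have hi' : i.val < j - 1 := by omega
      by_cases h0 : i.val = 0
      · have hie : i = ⟨0, h1⟩ := by ext; exact h0
        rw [hie]; exact hR.2.1 h1
      · have hlt1 : (⟨0, h1⟩ : Fin n) < i := by
          rw [Fin.lt_def]; exact (by omega : (0:ℕ) < i.val)
        have hlt2 : i < (⟨j - 1, hj'⟩ : Fin n) := by
          rw [Fin.lt_def]; exact hi'
        have hWm := hW i hlt1 hlt2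
        have h01 : π ⟨0, h1⟩ = 1 := hR.2.1 h1
        have hge := hR.1 i
        have hle : π i ≤ 1 := by
          calc π i ≤ min (π ⟨0, h1⟩) (π ⟨j - 1, hj'⟩) := hWm
            _ ≤ π ⟨0, h1⟩ := min_le_left _ _
            _ = 1 := h01
        omega
    · rintro ⟨hR, hones⟩
      have h01 : π ⟨0, h1⟩ = 1 := hR.2.1 h1
      have hlt : (⟨0, h1⟩ : Fin n) < (⟨j - 1, hj'⟩ : Fin n) := by
        rw [Fin.lt_def]; exact (by omega : (0:ℕ) < j - 1)
      refine ⟨hR, ⟨hlt, ?_⟩, ?_⟩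
      · intro ℓ hl1 hl2
        rw [Fin.lt_def] at hl2
        have hl2' : ℓ.val < j - 1 := hl2
        have hone : π ℓ = 1 := hones ℓ (by omega)
        rw [hone]
        exact le_min (le_of_eq h01.symm) (hR.1 _)
      · rintro ⟨_, hs⟩
        have hlt1 : (⟨0, h1⟩ : Fin n) < (⟨1, by omega⟩ : Fin n) := by
          rw [Fin.lt_def]; exact (by omega : (0:ℕ) < 1)
        have hlt2 : (⟨1, by omega⟩ : Fin n) < (⟨j - 1, hj'⟩ : Fin n) := by
          rw [Fin.lt_def]; exact (by omega : (1:ℕ) < j - 1)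
        have hsm := hs ⟨1, by omega⟩ hlt1 hlt2
        have hge := hR.1 (⟨1, by omega⟩ : Fin n)
        have hmin : min (π ⟨0, h1⟩) (π ⟨j - 1, hj'⟩) ≤ 1 := by
          rw [h01]; exact min_le_left _ _
        omega
  have hcard := RGSaux.card_ones_prefix n (n - j + 2) (j - 2) (by omega) (by omega)
  rw [hset, hcard, RGSaux.rgs_ncard]
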